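/- Suppose the pair (x, λ) satisfies the global KKT system, witnessed by subgradients (g_i, h_i) of J_i at (x_i, σ_i) and v_i ∈ N_{𝒳_i}(x_i), where σ_i = Σ_{j≠i} A_j x_j. Then, setting λ_i := λ/N and d_i := −h_i − λ/N for every i, the tuple (x, (σ_i), (λ_i), (d_i)) satisfies the per-agent KKT system (witnessed by the same subgradients and normal-cone elements). -/

import Mathlib

open Matrix Finset

/-- If `(x, λ)` satisfies the global KKT system (witnessed by
subgradients `(g i, h i)` and normal-cone elements `v i`), then, setting
`lam i := λ/N` and `d i := -h i - λ/N`, the tuple `(x, σ, (lam i), (d i))`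
with `σ i = ∑_{j ≠ i} A j *ᵥ x j` satisfies the per-agent KKT system,
witnessed by the same subgradients and normal-cone elements. -/
theorem stmt_1
    (N l : ℕ) (hN : 2 ≤ N)
    (n : Fin N → ℕ)
    (X : ∀ i, Set (Fin (n i) → ℝ))
    (hXne : ∀ i, (X i).Nonempty)
    (hXcl : ∀ i, IsClosed (X i))
    (hXcv : ∀ i, Convex ℝ (X i))
    (A : ∀ i, Matrix (Fin l) (Fin (n i)) ℝ)
    (J : ∀ i, (Fin (n i) → ℝ) → (Fin l → ℝ) → ℝ)
    (hJ : ∀ i, ConvexOn ℝ Set.univ (fun p : (Fin (n i) → ℝ) × (Fin l → ℝ) => J i p.1 p.2))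
    (c : Fin l → ℝ)
    (x : ∀ i, Fin (n i) → ℝ)
    (lam : Fin l → ℝ)
    (σ : Fin N → Fin l → ℝ)
    (g : ∀ i, Fin (n i) → ℝ) (h : Fin N → Fin l → ℝ) (v : ∀ i, Fin (n i) → ℝ)
    -- the aggregates
    (hsig : ∀ i, σ i = ∑ j ∈ Finset.univ.erase i, A j *ᵥ x j)
    -- x is feasible for the local sets
    (hx : ∀ i, x i ∈ X i)
    -- (g i, h i) is a subgradient of J i at (x i, σ i)
    (hsub : ∀ i, ∀ (x' : Fin (n i) → ℝ) (σ' : Fin l → ℝ),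
      J i (x i) (σ i) + g i ⬝ᵥ (x' - x i) + h i ⬝ᵥ (σ' - σ i) ≤ J i x' σ')
    -- v i is in the normal cone of X i at x i
    (hv : ∀ i, ∀ w ∈ X i, v i ⬝ᵥ (w - x i) ≤ 0)
    -- global stationarity
    (heq : ∀ i, g i + ∑ j ∈ Finset.univ.erase i, (A i)ᵀ *ᵥ h j
      + (A i)ᵀ *ᵥ lam + v i = 0)
    -- global dual feasibility, primal feasibility and complementary slackness
    (hlam : 0 ≤ lam)
    (hfeas : 0 ≤ c - ∑ i, A i *ᵥ x i)
    (hcs : lam ⬝ᵥ (c - ∑ i, A i *ᵥ x i) = 0) :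
    -- the per-agent KKT system holds with lam_i := λ/N and d_i := -h i - λ/N,
    -- witnessed by the same g, h, v
    (∀ i, g i + (A i)ᵀ *ᵥ ((N : ℝ)⁻¹ • lam)
        - ∑ j ∈ Finset.univ.erase i, (A i)ᵀ *ᵥ (-h j - (N : ℝ)⁻¹ • lam) + v i = 0)
    ∧ (∀ i, h i + (N : ℝ)⁻¹ • lam + (-h i - (N : ℝ)⁻¹ • lam) = 0)
    ∧ (∀ i : Fin N, 0 ≤ (N : ℝ)⁻¹ • lam)
    ∧ (∀ i, 0 ≤ c - A i *ᵥ x i - σ i)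
    ∧ (∀ i, ((N : ℝ)⁻¹ • lam) ⬝ᵥ (c - A i *ᵥ x i - σ i) = 0) := by

  have hN0 : (N:ℝ) ≠ 0 := by
    have : (0:ℕ) < N := by omega
    exact_mod_cast this.ne'
  have hslack : ∀ i, c - A i *ᵥ x i - σ i = c - ∑ j, A j *ᵥ x j := by
    intro i
    rw [hsig i, ← Finset.add_sum_erase _ _ (Finset.mem_univ i)]
    abel
  refine ⟨?_, ?_, ?_, ?_, ?_⟩
  · intro i
    have key : ∑ j ∈ Finset.univ.erase i, (A i)ᵀ *ᵥ (-h j - (N : ℝ)⁻¹ • lam)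
        = -(∑ j ∈ Finset.univ.erase i, (A i)ᵀ *ᵥ h j)
          - ((N - 1 : ℝ) * (N:ℝ)⁻¹) • ((A i)ᵀ *ᵥ lam) := by
      have hcard : (Finset.univ.erase i).card = N - 1 := by
        simp [Finset.card_erase_of_mem]
      rw [Finset.sum_congr rfl (fun j _ => by
        rw [Matrix.mulVec_sub, Matrix.mulVec_neg, Matrix.mulVec_smul])]
      rw [Finset.sum_sub_distrib, Finset.sum_neg_distrib, Finset.sum_const, hcard]
      have h1 : ((N:ℕ) - 1 : ℕ) • ((N : ℝ)⁻¹ • ((A i)ᵀ *ᵥ lam))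
          = ((N - 1 : ℝ) * (N:ℝ)⁻¹) • ((A i)ᵀ *ᵥ lam) := by
        rw [← Nat.cast_smul_eq_nsmul ℝ, smul_smul]
        congr 1
        have : ((N - 1 : ℕ) : ℝ) = (N : ℝ) - 1 := by
          have : 1 ≤ N := by omega
          push_cast [this]; ring
        rw [this]
      rw [h1]
    rw [key, Matrix.mulVec_smul]
    have hcoef : (N : ℝ)⁻¹ • ((A i)ᵀ *ᵥ lam)
        + ((N - 1 : ℝ) * (N:ℝ)⁻¹) • ((A i)ᵀ *ᵥ lam) = (A i)ᵀ *ᵥ lam := by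
      rw [← add_smul]
      have : (N : ℝ)⁻¹ + (N - 1 : ℝ) * (N:ℝ)⁻¹ = 1 := by
        field_simp
        ring
      rw [this, one_smul]
    have := heq i
    calc g i + (N : ℝ)⁻¹ • ((A i)ᵀ *ᵥ lam)
        - (-(∑ j ∈ Finset.univ.erase i, (A i)ᵀ *ᵥ h j)
          - ((N - 1 : ℝ) * (N:ℝ)⁻¹) • ((A i)ᵀ *ᵥ lam)) + v i
        = g i + ∑ j ∈ Finset.univ.erase i, (A i)ᵀ *ᵥ h j
          + ((N : ℝ)⁻¹ • ((A i)ᵀ *ᵥ lam)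
            + ((N - 1 : ℝ) * (N:ℝ)⁻¹) • ((A i)ᵀ *ᵥ lam)) + v i := by abel
      _ = g i + ∑ j ∈ Finset.univ.erase i, (A i)ᵀ *ᵥ h j + (A i)ᵀ *ᵥ lam + v i := by
          rw [hcoef]
      _ = 0 := heq i
  · intro i; abel
  · intro i
    exact smul_nonneg (by positivity) hlam
  · intro i
    rw [hslack i]
    exact hfeas
  · intro i
    rw [hslack i, smul_dotProduct, hcs, smul_zero]
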